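/- Let Z and X be metric spaces with their Borel σ-algebras, g : Z → X a continuous map, u a finite Borel measure on Z, λ a σ-finite Borel measure on X, and q, h : X → [0,∞) Borel measurable functions such that the pushforward measure g_*u equals λ.withDensity q and such that h(x) = 0 for λ-almost every x with q(x) = 0. Set γ := λ.withDensity h and assume γ is a finite measure. Let L ≥ 1 with finite index sets I_ℓ, measurable partitions {B_{ℓ,i}}_{i∈I_ℓ} of Z, finite measures φ^R_{ℓ,i} on Z, and combination weights k^R_ℓ ≥ 0 with Σ_ℓ k^R_ℓ > 0 for every R. Suppose there is a nonempty L₀ ⊆ {1,…,L} such that: for every ℓ ∈ L₀ and i ∈ I_ℓ, φ^R_{ℓ,i} converges weakly, as R → ∞, to the measure u.withDensity(z ↦ 1_{B_{ℓ,i}}(z) · h(g(z)) / q(g(z))), and k^R_ℓ → ∞; while for ℓ ∉ L₀ both k^R_ℓ and φ^R_{ℓ,i}(Z) stay bounded in R. Then the combined pushforward measure (Σ_ℓ k^R_ℓ)⁻¹ · Σ_ℓ k^R_ℓ · Σ_{i∈I_ℓ} g_*(φ^R_{ℓ,i}) converges weakly to γ as R → ∞. -/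

import Mathlib

open MeasureTheory Filter Topology
open scoped NNReal ENNReal BoundedContinuousFunction

/-- Weak convergence of a sequence of (finite Borel) measures: convergence of integrals of
all bounded continuous real-valued functions. -/
def WeakConv {X : Type*} [MeasurableSpace X] [TopologicalSpace X]
    (μ : ℕ → Measure X) (ν : Measure X) : Prop :=
  ∀ f : X →ᵇ ℝ,
    Tendsto (fun n => ∫ x, f x ∂(μ n)) atTop (𝓝 (∫ x, f x ∂ν))

theorem reparameterized_combined_estimator_weak_convergence
    {Z X : Type*} [MetricSpace Z] [MeasurableSpace Z] [BorelSpace Z]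
    [MetricSpace X] [MeasurableSpace X] [BorelSpace X]
    (g : Z → X) (hg : Continuous g)
    (u : Measure Z) [IsFiniteMeasure u]
    (lam : Measure X) [SigmaFinite lam]
    (q h : X → ℝ≥0) (hq : Measurable q) (hh : Measurable h)
    (hpush : Measure.map g u = lam.withDensity fun x => (q x : ℝ≥0∞))
    (hzero : ∀ᵐ x ∂lam, q x = 0 → h x = 0)
    (γ : Measure X) (hγdef : γ = lam.withDensity fun x => (h x : ℝ≥0∞))
    [IsFiniteMeasure γ]
    (L : ℕ) (hL : 1 ≤ L)
    (ι : Fin L → Type*) [∀ ℓ, Fintype (ι ℓ)]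
    (B : ∀ ℓ : Fin L, ι ℓ → Set Z)
    (hBmeas : ∀ ℓ i, MeasurableSet (B ℓ i))
    (hBdisj : ∀ ℓ, Pairwise fun i j => Disjoint (B ℓ i) (B ℓ j))
    (hBcover : ∀ ℓ, (⋃ i, B ℓ i) = Set.univ)
    (φ : ℕ → ∀ ℓ : Fin L, ι ℓ → Measure Z)
    (hφfin : ∀ R ℓ i, IsFiniteMeasure (φ R ℓ i))
    (k : ℕ → Fin L → ℝ≥0)
    (hkpos : ∀ R, 0 < ∑ ℓ, k R ℓ)
    (L₀ : Set (Fin L)) (hL₀ : L₀.Nonempty)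
    (ha : ∀ ℓ ∈ L₀, ∀ i, WeakConv (fun R => φ R ℓ i)
      (u.withDensity fun z =>
        Set.indicator (B ℓ i) (fun z' => ((h (g z') / q (g z') : ℝ≥0) : ℝ≥0∞)) z))
    (hb : ∀ ℓ ∈ L₀, Tendsto (fun R => k R ℓ) atTop atTop)
    (hc₁ : ∀ ℓ ∉ L₀, ∃ C : ℝ≥0, ∀ R, k R ℓ ≤ C)
    (hc₂ : ∀ ℓ ∉ L₀, ∃ C : ℝ≥0, ∀ R (i : ι ℓ), φ R ℓ i Set.univ ≤ (C : ℝ≥0∞)) :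
    WeakConv (fun R => (∑ ℓ, k R ℓ)⁻¹ • ∑ ℓ, k R ℓ • ∑ i, Measure.map g (φ R ℓ i)) γ := by
  classical
  have hgm : Measurable g := hg.measurable
  set Dx : X → ℝ≥0∞ := fun x => ((h x / q x : ℝ≥0) : ℝ≥0∞) with hDxdef
  have hDxm : Measurable Dx := (hh.div hq).coe_nnreal_ennreal
  set ν : Measure Z := u.withDensity (fun z => Dx (g z)) with hνdef
  -- the pushforward of ν is γ
  have hmapν : Measure.map g ν = γ := by
    have h1 : Measure.map g ν = (Measure.map g u).withDensity Dx := by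
      ext s hs
      rw [Measure.map_apply hgm hs, hνdef, withDensity_apply _ (hgm hs),
        withDensity_apply _ hs, setLIntegral_map hs hDxm hgm]
    rw [h1, hpush, ← withDensity_mul _ hq.coe_nnreal_ennreal hDxm, hγdef]
    apply withDensity_congr_ae
    filter_upwards [hzero] with x hx
    rcases eq_or_ne (q x) 0 with h0 | h0
    · simp [Pi.mul_apply, hDxdef, h0, hx h0]
    · have : q x * (h x / q x) = h x := by
        rw [mul_comm, div_mul_cancel₀ _ h0]
      simp [Pi.mul_apply, hDxdef, ← ENNReal.coe_mul, this]
  -- ν is a finite measure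
  haveI hνfin : IsFiniteMeasure ν := by
    constructor
    have hu : ν Set.univ = γ Set.univ := by
      rw [← hmapν, Measure.map_apply hgm MeasurableSet.univ, Set.preimage_univ]
    rw [hu]; exact measure_lt_top γ _
  -- indicator densities sum pointwise to the full density
  have hsum_ind : ∀ (ℓ : Fin L) (z : Z),
      (∑ i, Set.indicator (B ℓ i) (fun z' => Dx (g z')) z) = Dx (g z) := by
    intro ℓ z
    obtain ⟨i, hi⟩ : ∃ i, z ∈ B ℓ i := by
      have hz : z ∈ ⋃ i, B ℓ i := by rw [hBcover ℓ]; trivial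
      exact Set.mem_iUnion.mp hz
    rw [Finset.sum_eq_single i]
    · simp [Set.indicator_of_mem hi]
    · intro j _ hj
      have hnot : z ∉ B ℓ j := fun hzj =>
        Set.disjoint_left.mp (hBdisj ℓ hj) hzj hi
      simp [Set.indicator_of_notMem hnot]
    · intro hi'; exact absurd (Finset.mem_univ i) hi'
  -- the limit measures per (ℓ, i)
  set νi : ∀ ℓ : Fin L, ι ℓ → Measure Z := fun ℓ i =>
    u.withDensity (fun z => Set.indicator (B ℓ i) (fun z' => Dx (g z')) z) with hνidef
  have hνim : ∀ (ℓ : Fin L) (i : ι ℓ),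
      Measurable (fun z => Set.indicator (B ℓ i) (fun z' => Dx (g z')) z) := fun ℓ i =>
    Measurable.indicator (hDxm.comp hgm) (hBmeas ℓ i)
  have hsum_meas : ∀ ℓ : Fin L, (∑ i, νi ℓ i) = ν := by
    intro ℓ
    ext s hs
    calc (∑ i, νi ℓ i) s
        = ∑ i, ∫⁻ z in s, Set.indicator (B ℓ i) (fun z' => Dx (g z')) z ∂u := by
          rw [Measure.finset_sum_apply]
          exact Finset.sum_congr rfl fun i _ => withDensity_apply _ hs
      _ = ∫⁻ z in s, ∑ i, Set.indicator (B ℓ i) (fun z' => Dx (g z')) z ∂u :=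
          (lintegral_finset_sum _ fun i _ => hνim ℓ i).symm
      _ = ∫⁻ z in s, Dx (g z) ∂u := lintegral_congr fun z => hsum_ind ℓ z
      _ = ν s := (withDensity_apply _ hs).symm
  haveI hνifin : ∀ (ℓ : Fin L) (i : ι ℓ), IsFiniteMeasure (νi ℓ i) := by
    intro ℓ i
    constructor
    have hle : νi ℓ i ≤ ν := by
      rw [hνidef, hνdef]
      exact withDensity_mono (Filter.Eventually.of_forall fun z =>
        Set.indicator_le_self _ _ z)
    exact lt_of_le_of_lt (hle Set.univ) (measure_lt_top ν _)
  -- now fix a bounded continuous function f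
  intro f
  set F : Z →ᵇ ℝ := f.compContinuous ⟨g, hg⟩ with hFdef
  have hInt : ∀ (μ : Measure Z), ∫ x, f x ∂(Measure.map g μ) = ∫ z, F z ∂μ := fun μ =>
    integral_map hgm.aemeasurable f.continuous.measurable.aestronglyMeasurable
  set c : ℝ := ∫ x, f x ∂γ with hcdef
  set I : ℕ → Fin L → ℝ := fun R ℓ => ∑ i, ∫ z, F z ∂(φ R ℓ i) with hIdef
  set S : ℕ → ℝ≥0 := fun R => ∑ ℓ, k R ℓ with hSdef
  have hS0 : ∀ R, (0 : ℝ) < (S R : ℝ) := fun R => by exact_mod_cast hkpos R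
  have hSne : ∀ R, (S R : ℝ) ≠ 0 := fun R => (hS0 R).ne'
  -- for ℓ ∈ L₀ the inner sums converge to c
  have key : ∀ ℓ ∈ L₀, Tendsto (fun R => I R ℓ) atTop (𝓝 c) := by
    intro ℓ hℓ
    have h1 : Tendsto (fun R => ∑ i, ∫ z, F z ∂(φ R ℓ i)) atTop
        (𝓝 (∑ i, ∫ z, F z ∂(νi ℓ i))) :=
      tendsto_finset_sum _ fun i _ => ha ℓ hℓ i F
    have h2 : (∑ i, ∫ z, F z ∂(νi ℓ i)) = c := by
      rw [← integral_finset_sum_measure fun i _ => F.integrable (νi ℓ i),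
        hsum_meas ℓ, ← hInt ν, hmapν]
    rw [hIdef]
    simpa [h2] using h1
  -- the combined integral formula
  have hφmapfin : ∀ R ℓ i, IsFiniteMeasure (Measure.map g (φ R ℓ i)) := by
    intro R ℓ i
    haveI := hφfin R ℓ i
    exact Measure.isFiniteMeasure_map _ _
  have hFint : ∀ R (ℓ : Fin L) (i : ι ℓ), Integrable (fun x => f x) (Measure.map g (φ R ℓ i)) := by
    intro R ℓ i
    haveI := hφmapfin R ℓ i
    exact f.integrable _
  have hcomb : ∀ R, ∫ x, f x ∂((∑ ℓ, k R ℓ)⁻¹ • ∑ ℓ, k R ℓ • ∑ i, Measure.map g (φ R ℓ i))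
      = (S R : ℝ)⁻¹ * ∑ ℓ, (k R ℓ : ℝ) * I R ℓ := by
    intro R
    rw [integral_smul_nnreal_measure]
    rw [integral_finset_sum_measure (fun ℓ _ => by
      exact ((integrable_finset_sum_measure.2 fun i _ => hFint R ℓ i).smul_measure_nnreal))]
    have hterm : ∀ ℓ : Fin L,
        ∫ x, f x ∂(k R ℓ • ∑ i, Measure.map g (φ R ℓ i)) = (k R ℓ : ℝ) * I R ℓ := by
      intro ℓ
      rw [integral_smul_nnreal_measure,
        integral_finset_sum_measure (fun i _ => hFint R ℓ i)]
      simp only [NNReal.smul_def, smul_eq_mul, hIdef]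
      congr 1
      exact Finset.sum_congr rfl fun i _ => hInt (φ R ℓ i)
    rw [Finset.sum_congr rfl fun ℓ _ => hterm ℓ]
    simp [NNReal.smul_def, hSdef]
  -- coerced sum identity
  have hsumcoe : ∀ R, ∑ ℓ, (k R ℓ : ℝ) = (S R : ℝ) := by
    intro R; rw [hSdef]; push_cast; rfl
  -- key algebraic rewriting
  have hrepr : ∀ R, (S R : ℝ)⁻¹ * (∑ ℓ, (k R ℓ : ℝ) * I R ℓ) - c
      = ∑ ℓ, ((k R ℓ : ℝ) / (S R : ℝ)) * (I R ℓ - c) := by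
    intro R
    have : ∑ ℓ, ((k R ℓ : ℝ) / (S R : ℝ)) * (I R ℓ - c)
        = (S R : ℝ)⁻¹ * ∑ ℓ, ((k R ℓ : ℝ) * I R ℓ - (k R ℓ : ℝ) * c) := by
      rw [Finset.mul_sum]
      exact Finset.sum_congr rfl fun ℓ _ => by ring
    rw [this, Finset.sum_sub_distrib, ← Finset.sum_mul, hsumcoe R, mul_sub,
      ← mul_assoc, inv_mul_cancel₀ (hSne R), one_mul]
  -- S tends to infinity
  obtain ⟨ℓ₀, hℓ₀⟩ := hL₀
  have hStop : Tendsto (fun R => (S R : ℝ)) atTop atTop := by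
    have h1 : Tendsto (fun R => ((k R ℓ₀ : ℝ))) atTop atTop :=
      NNReal.tendsto_coe_atTop.mpr (hb ℓ₀ hℓ₀)
    refine tendsto_atTop_mono (fun R => ?_) h1
    exact_mod_cast Finset.single_le_sum (f := k R) (fun _ _ => zero_le) (Finset.mem_univ ℓ₀)
  -- each error term tends to zero
  have hterm0 : ∀ ℓ : Fin L,
      Tendsto (fun R => ((k R ℓ : ℝ) / (S R : ℝ)) * (I R ℓ - c)) atTop (𝓝 0) := by
    intro ℓ
    by_cases hℓ : ℓ ∈ L₀
    · have hIc : Tendsto (fun R => |I R ℓ - c|) atTop (𝓝 0) := by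
        have h0 : Tendsto (fun R => I R ℓ - c) atTop (𝓝 (0 : ℝ)) := by
          simpa using (key ℓ hℓ).sub (tendsto_const_nhds (x := c))
        simpa using h0.abs
      refine squeeze_zero_norm (fun R => ?_) hIc
      have hk1 : (k R ℓ : ℝ) / (S R : ℝ) ≤ 1 := by
        rw [div_le_one (hS0 R)]
        exact_mod_cast Finset.single_le_sum (f := k R) (fun _ _ => zero_le) (Finset.mem_univ ℓ)
      have hk0 : (0 : ℝ) ≤ (k R ℓ : ℝ) / (S R : ℝ) :=
        div_nonneg (k R ℓ).coe_nonneg (hS0 R).le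
      calc ‖((k R ℓ : ℝ) / (S R : ℝ)) * (I R ℓ - c)‖
          = ((k R ℓ : ℝ) / (S R : ℝ)) * |I R ℓ - c| := by
            rw [Real.norm_eq_abs, abs_mul, abs_of_nonneg hk0]
        _ ≤ 1 * |I R ℓ - c| := by
            exact mul_le_mul_of_nonneg_right hk1 (abs_nonneg _)
        _ = |I R ℓ - c| := one_mul _
    · obtain ⟨C, hC⟩ := hc₁ ℓ hℓ
      obtain ⟨C', hC'⟩ := hc₂ ℓ hℓ
      -- bound on |I R ℓ - c|
      set M : ℝ := (Fintype.card (ι ℓ)) * (‖F‖ * (C' : ℝ)) + |c| with hMdef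
      have hIb : ∀ R, |I R ℓ - c| ≤ M := by
        intro R
        have h1 : |I R ℓ| ≤ (Fintype.card (ι ℓ)) * (‖F‖ * (C' : ℝ)) := by
          calc |I R ℓ| ≤ ∑ i, |∫ z, F z ∂(φ R ℓ i)| := by
                rw [hIdef]; exact Finset.abs_sum_le_sum_abs _ _
            _ ≤ ∑ i : ι ℓ, ‖F‖ * (C' : ℝ) := by
                refine Finset.sum_le_sum fun i _ => ?_
                haveI := hφfin R ℓ i
                have hb1 : ‖∫ z, F z ∂(φ R ℓ i)‖ ≤ ‖F‖ * ((φ R ℓ i) Set.univ).toReal :=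
                  norm_integral_le_of_norm_le_const
                    (Filter.Eventually.of_forall fun z => F.norm_coe_le_norm z)
                refine le_trans hb1 ?_
                refine mul_le_mul_of_nonneg_left ?_ (norm_nonneg F)
                have := hC' R i
                calc ((φ R ℓ i) Set.univ).toReal ≤ ((C' : ℝ≥0∞)).toReal :=
                      ENNReal.toReal_mono ENNReal.coe_ne_top (hC' R i)
                  _ = (C' : ℝ) := by simp
            _ = (Fintype.card (ι ℓ)) * (‖F‖ * (C' : ℝ)) := by
                rw [Finset.sum_const, Finset.card_univ, nsmul_eq_mul]
        calc |I R ℓ - c| ≤ |I R ℓ| + |c| := abs_sub _ _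
          _ ≤ M := by rw [hMdef]; exact add_le_add h1 (le_refl _)
      have hM0 : 0 ≤ M := le_trans (abs_nonneg _) (hIb 0)
      -- k/S → 0
      have hkS0 : Tendsto (fun R => (C : ℝ) / (S R : ℝ) * M) atTop (𝓝 0) := by
        have h2 : Tendsto (fun R => ((S R : ℝ))⁻¹) atTop (𝓝 0) :=
          hStop.inv_tendsto_atTop
        have h3 : Tendsto (fun R => (C : ℝ) * ((S R : ℝ))⁻¹ * M) atTop
            (𝓝 ((C : ℝ) * 0 * M)) := (h2.const_mul _).mul_const _
        simpa [div_eq_mul_inv] using h3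
      refine squeeze_zero_norm (fun R => ?_) hkS0
      have hkC : (k R ℓ : ℝ) / (S R : ℝ) ≤ (C : ℝ) / (S R : ℝ) := by
        gcongr
        exact_mod_cast hC R
      have hk0 : (0 : ℝ) ≤ (k R ℓ : ℝ) / (S R : ℝ) :=
        div_nonneg (k R ℓ).coe_nonneg (hS0 R).le
      calc ‖((k R ℓ : ℝ) / (S R : ℝ)) * (I R ℓ - c)‖
          = ((k R ℓ : ℝ) / (S R : ℝ)) * |I R ℓ - c| := by
            rw [Real.norm_eq_abs, abs_mul, abs_of_nonneg hk0]
        _ ≤ ((C : ℝ) / (S R : ℝ)) * M :=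
            mul_le_mul hkC (hIb R) (abs_nonneg _)
              (div_nonneg C.coe_nonneg (hS0 R).le)
  -- conclude
  have hsum0 : Tendsto (fun R => ∑ ℓ, ((k R ℓ : ℝ) / (S R : ℝ)) * (I R ℓ - c)) atTop (𝓝 0) := by
    have := tendsto_finset_sum (Finset.univ : Finset (Fin L)) fun ℓ _ => hterm0 ℓ
    simpa using this
  have hmain : Tendsto (fun R => (S R : ℝ)⁻¹ * (∑ ℓ, (k R ℓ : ℝ) * I R ℓ)) atTop (𝓝 c) := by
    rw [← tendsto_sub_nhds_zero_iff]
    simpa [hrepr] using hsum0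
  have hfinal := hmain.congr fun R => (hcomb R).symm
  simpa [hcdef] using hfinal
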